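/- Let M ⊆ B(H) be a von Neumann algebra and let (R, T, ψ) be a bipartite exact embezzlement protocol for α in (M, M', H). Then for every X ∈ M, Y ∈ M', and all i, j ∈ Fin d: (R i j)* (Y ψ) = (if j = 0 then (1 / α i) • (Y (T i 0) ψ) else 0) and (T i j)* (X ψ) = (if j = 0 then (1 / α i) • (X (R i 0) ψ) else 0). -/

import Mathlib

open scoped InnerProductSpace
open ContinuousLinearMap

/-- The block operator on `ℓ²(Fin d; H)` associated with a `d × d` matrix of operators on `H`,
acting by `(R x) i = ∑ j, (R i j) (x j)`. -/
noncomputable def blockOp {H : Type*} [NormedAddCommGroup H] [InnerProductSpace ℂ H] {d : ℕ}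
    (R : Fin d → Fin d → H →L[ℂ] H) :
    (PiLp 2 fun _ : Fin d => H) →L[ℂ] (PiLp 2 fun _ : Fin d => H) :=
  (((PiLp.continuousLinearEquiv 2 ℂ (fun _ : Fin d => H)).symm :
      (∀ _ : Fin d, H) →L[ℂ] (PiLp 2 fun _ : Fin d => H))) ∘L
    (ContinuousLinearMap.pi fun i => ∑ j, (R i j) ∘L (ContinuousLinearMap.proj j)) ∘L
    (((PiLp.continuousLinearEquiv 2 ℂ (fun _ : Fin d => H)) :
      (PiLp 2 fun _ : Fin d => H) →L[ℂ] (∀ _ : Fin d, H)))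

variable {H : Type*} [NormedAddCommGroup H] [InnerProductSpace ℂ H] [CompleteSpace H]

/-- `R` is a contraction in `M_d ⊗ M`: all blocks lie in `M` and the block operator on
`ℓ²(Fin d; H)` has operator norm at most `1`. -/
def IsContractionIn (M : VonNeumannAlgebra H) {d : ℕ}
    (R : Fin d → Fin d → H →L[ℂ] H) : Prop :=
  (∀ i j, R i j ∈ M) ∧ ‖blockOp R‖ ≤ 1

/-- A bipartite exact embezzlement protocol for `α` in `(M, M', H)`: `R` is a contraction in
`M_d ⊗ M`, `T` is a contraction with blocks in the commutant `M'`, `ψ` is a unit vector, and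
`(R i 0)(T j 0) ψ = δ_{ij} α i • ψ` for all `i, j`. -/
def BipartiteProtocol (M : VonNeumannAlgebra H) {d : ℕ} [NeZero d] (α : Fin d → ℝ)
    (R T : Fin d → Fin d → H →L[ℂ] H) (ψ : H) : Prop :=
  IsContractionIn M R ∧ IsContractionIn M.commutant T ∧ ‖ψ‖ = 1 ∧
    ∀ i j, (R i 0) ((T j 0) ψ) = (if i = j then (α i : ℂ) else 0) • ψ

/-- A monopartite exact embezzlement protocol for `α` in `(M, H)`: `R` is a contraction in
`M_d ⊗ M`, `ψ` is a unit vector, and `⟨(R i 0)* X (R j 0) ψ, ψ⟩ = δ_{ij} (α i)² ⟨X ψ, ψ⟩`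
for all `X ∈ M` and all `i, j`. -/
def MonopartiteProtocol (M : VonNeumannAlgebra H) {d : ℕ} [NeZero d] (α : Fin d → ℝ)
    (R : Fin d → Fin d → H →L[ℂ] H) (ψ : H) : Prop :=
  IsContractionIn M R ∧ ‖ψ‖ = 1 ∧
    ∀ X ∈ M, ∀ i j : Fin d,
      ⟪(adjoint (R i 0)) (X ((R j 0) ψ)), ψ⟫_ℂ
        = (if i = j then ((α i : ℂ)) ^ 2 else 0) * ⟪X ψ, ψ⟫_ℂ

/-- The orthogonal projection of `H` onto the closure of `{Y ψ : Y ∈ S}`, as an operator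
on `H`. -/
noncomputable def suppProjOn (S : Set (H →L[ℂ] H)) (ψ : H) : H →L[ℂ] H :=
  letI K := (Submodule.span ℂ ((fun Y : H →L[ℂ] H => Y ψ) '' S)).topologicalClosure
  K.subtypeL ∘L (K.orthogonalProjection : H →L[ℂ] K)

/-- The support projection of the state `⟨· ψ, ψ⟩` on `M`: the orthogonal projection onto
the closure of `M' ψ`. -/
noncomputable def suppP (M : VonNeumannAlgebra H) (ψ : H) : H →L[ℂ] H :=
  suppProjOn (M.commutant : Set (H →L[ℂ] H)) ψ

/-- The support projection of the state `⟨· ψ, ψ⟩` on `M'`: the orthogonal projection onto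
the closure of `M ψ`. -/
noncomputable def suppP' (M : VonNeumannAlgebra H) (ψ : H) : H →L[ℂ] H :=
  suppProjOn (M : Set (H →L[ℂ] H)) ψ

set_option linter.unusedSectionVars false
set_option synthInstance.maxHeartbeats 1000000
set_option maxHeartbeats 1000000

section Aux
variable {d : ℕ}

instance : CompleteSpace (PiLp 2 fun _ : Fin d => H) :=
  inferInstance

lemma blockOp_apply (R : Fin d → Fin d → H →L[ℂ] H) (x : PiLp 2 fun _ : Fin d => H) (i : Fin d) :
    blockOp R x i = ∑ j, R i j (x j) := by
  simp [blockOp, ContinuousLinearMap.sum_apply]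

noncomputable def sing (k : Fin d) (v : H) : PiLp 2 fun _ : Fin d => H :=
  (WithLp.equiv 2 _).symm (Pi.single k v)

lemma sing_apply (k j : Fin d) (v : H) : sing k v j = if j = k then v else 0 := by
  simp [sing, Pi.single_apply]

lemma norm_sing (k : Fin d) (v : H) : ‖sing k v‖ = ‖v‖ := by
  have h := PiLp.norm_sq_eq_of_L2 (fun _ : Fin d => H) (sing k v)
  have h2 : ‖sing k v‖ ^ 2 = ‖v‖ ^ 2 := by
    rw [h, Finset.sum_eq_single k]
    · simp [sing_apply]
    · intro b _ hb; simp [sing_apply, hb]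
    · simp
  nlinarith [norm_nonneg (sing k v), norm_nonneg v]

lemma adjoint_apply_of_norm_eq {E : Type*} [NormedAddCommGroup E] [InnerProductSpace ℂ E]
    [CompleteSpace E] (A : E →L[ℂ] E) (hA : ‖A‖ ≤ 1) (x : E) (hx : ‖A x‖ = ‖x‖) :
    adjoint A (A x) = x := by
  have hn : ‖adjoint A (A x)‖ ≤ ‖x‖ := by
    calc ‖adjoint A (A x)‖ ≤ ‖adjoint A‖ * ‖A x‖ := le_opNorm _ _
    _ ≤ 1 * ‖x‖ := by rw [hx]; apply mul_le_mul_of_nonneg_right _ (norm_nonneg x)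
                      rw [show ‖adjoint A‖ = ‖A‖ from adjoint.norm_map A]; exact hA
    _ = ‖x‖ := one_mul _
  have hre : RCLike.re (⟪adjoint A (A x), x⟫_ℂ) = ‖x‖ ^ 2 := by
    rw [adjoint_inner_left, inner_self_eq_norm_sq, hx]
  have hsq : ‖adjoint A (A x) - x‖ ^ 2 ≤ 0 := by
    rw [@norm_sub_sq ℂ, hre]
    nlinarith [norm_nonneg (adjoint A (A x))]
  have h0 := sq_nonneg ‖adjoint A (A x) - x‖
  have : ‖adjoint A (A x) - x‖ = 0 := by nlinarith
  rwa [norm_eq_zero, sub_eq_zero] at this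

lemma adjoint_blockOp (R : Fin d → Fin d → H →L[ℂ] H) :
    adjoint (blockOp R) = blockOp (fun i j => adjoint (R j i)) := by
  symm
  rw [eq_adjoint_iff]
  intro x y
  simp only [PiLp.inner_apply, blockOp_apply, sum_inner, inner_sum, adjoint_inner_left]
  rw [Finset.sum_comm]

lemma key [NeZero d] (α : Fin d → ℝ) (hα : ∀ i, 0 < α i) (hsum : ∑ i, (α i) ^ 2 = 1)
    (A B : Fin d → Fin d → H →L[ℂ] H) (ψ : H) (hψ : ‖ψ‖ = 1)
    (hA : ‖blockOp A‖ ≤ 1) (hB : ‖blockOp B‖ ≤ 1)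
    (hAB : ∀ i j, (A i 0) ((B j 0) ψ) = (if i = j then (α i : ℂ) else 0) • ψ) :
    ∀ k j, adjoint (A k j) ψ
      = if j = 0 then ((1 / α k : ℝ) : ℂ) • (B k 0) ψ else 0 := by
  -- blockOp A applied to sing (0 : Fin d) (B k 0 ψ) equals sing k ((α k : ℂ) • ψ)
  have hApp : ∀ k, blockOp A (sing (0 : Fin d) ((B k 0) ψ)) = sing k ((α k : ℂ) • ψ) := by
    intro k
    ext i
    rw [blockOp_apply, Finset.sum_eq_single 0]
    · rw [sing_apply]
      rw [if_pos (rfl : (0 : Fin d) = 0), hAB i k, sing_apply]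
      by_cases h : i = k
      · subst h; simp
      · simp [h]
    · intro b _ hb; rw [sing_apply, if_neg hb]; simp
    · simp
  -- lower bound : α k ≤ ‖B k 0 ψ‖
  have hlow : ∀ k, α k ≤ ‖(B k 0) ψ‖ := by
    intro k
    have h1 : ‖blockOp A (sing (0 : Fin d) ((B k 0) ψ))‖ ≤ ‖sing (0 : Fin d) ((B k 0) ψ)‖ := by
      calc ‖blockOp A (sing (0 : Fin d) ((B k 0) ψ))‖ ≤ ‖blockOp A‖ * ‖sing (0 : Fin d) ((B k 0) ψ)‖ :=
            le_opNorm _ _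
      _ ≤ 1 * _ := mul_le_mul_of_nonneg_right hA (norm_nonneg _)
      _ = _ := one_mul _
    rw [hApp k, norm_sing, norm_sing, norm_smul, hψ] at h1
    simpa [abs_of_pos (hα k)] using h1
  -- upper bound : ∑ ‖B k 0 ψ‖² ≤ 1
  have hupp : ∑ k, ‖(B k 0) ψ‖ ^ 2 ≤ 1 := by
    have h1 : ‖blockOp B (sing (0 : Fin d) ψ)‖ ≤ 1 := by
      calc ‖blockOp B (sing (0 : Fin d) ψ)‖ ≤ ‖blockOp B‖ * ‖sing (0 : Fin d) ψ‖ := le_opNorm _ _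
      _ ≤ 1 * 1 := by
            apply mul_le_mul hB _ (norm_nonneg _) zero_le_one
            rw [norm_sing, hψ]
      _ = 1 := one_mul _
    have h2 : ‖blockOp B (sing (0 : Fin d) ψ)‖ ^ 2 = ∑ k, ‖(B k 0) ψ‖ ^ 2 := by
      rw [PiLp.norm_sq_eq_of_L2]
      congr 1
      ext k
      congr 1
      rw [blockOp_apply, Finset.sum_eq_single 0]
      · rw [sing_apply, if_pos rfl]
      · intro b _ hb; rw [sing_apply, if_neg hb]; simp
      · simp
    nlinarith [norm_nonneg (blockOp B (sing (0 : Fin d) ψ))]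
  -- equality of norms
  have hnorm : ∀ k, ‖(B k 0) ψ‖ = α k := by
    intro k
    have hterm : ∀ m : Fin d, (α m) ^ 2 ≤ ‖(B m 0) ψ‖ ^ 2 := fun m =>
      pow_le_pow_left₀ (le_of_lt (hα m)) (hlow m) 2
    have hsum2 : ∑ m, ‖(B m 0) ψ‖ ^ 2 = ∑ m, (α m) ^ 2 := by
      rw [hsum]
      exact le_antisymm hupp (by rw [← hsum] at hupp ⊢; exact Finset.sum_le_sum fun m _ => hterm m)
    have heq : ‖(B k 0) ψ‖ ^ 2 = (α k) ^ 2 := by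
      by_contra hne
      have hlt : (α k) ^ 2 < ‖(B k 0) ψ‖ ^ 2 := lt_of_le_of_ne (hterm k) (Ne.symm hne)
      have : ∑ m, (α m) ^ 2 < ∑ m, ‖(B m 0) ψ‖ ^ 2 :=
        Finset.sum_lt_sum (fun m _ => hterm m) ⟨k, Finset.mem_univ k, hlt⟩
      linarith
    have h1 : ‖(B k 0) ψ‖ ≤ α k := by nlinarith [norm_nonneg ((B k 0) ψ), hα k]
    linarith [hlow k]
  -- isometry at the point
  intro k j
  have hxnorm : ‖blockOp A (sing (0 : Fin d) ((B k 0) ψ))‖ = ‖sing (0 : Fin d) ((B k 0) ψ)‖ := by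
    rw [hApp k, norm_sing, norm_sing, norm_smul, hψ, hnorm k]
    simp [abs_of_pos (hα k)]
  have hiso := adjoint_apply_of_norm_eq (blockOp A) hA _ hxnorm
  rw [hApp k] at hiso
  have hsingsmul : sing k ((α k : ℂ) • ψ) = (α k : ℂ) • sing k ψ := by
    ext i
    rw [sing_apply]
    by_cases h : i = k
    · subst h; simp [sing_apply]
    · simp [sing_apply, h]
  rw [hsingsmul, map_smul] at hiso
  have hαne : (α k : ℂ) ≠ 0 := by
    simp only [ne_eq, Complex.ofReal_eq_zero]
    exact ne_of_gt (hα k)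
  have hdiv : adjoint (blockOp A) (sing k ψ) = ((1 / α k : ℝ) : ℂ) • sing (0 : Fin d) ((B k 0) ψ) := by
    have := congrArg (fun v => ((α k : ℂ))⁻¹ • v) hiso
    simp only [smul_smul, inv_mul_cancel₀ hαne, one_smul] at this
    rw [this]
    norm_num
  have hcomp := congrArg (fun v => v j) hdiv
  simp only at hcomp
  rw [adjoint_blockOp, blockOp_apply] at hcomp
  have hlhs : ∑ i, adjoint (A i j) (sing k ψ i) = adjoint (A k j) ψ := by
    rw [Finset.sum_eq_single k]
    · rw [sing_apply, if_pos rfl]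
    · intro b _ hb; rw [sing_apply, if_neg hb]; simp
    · simp
  rw [hlhs] at hcomp
  rw [hcomp, PiLp.smul_apply, sing_apply]
  by_cases h : j = 0
  · simp [h]
  · simp [h]

end Aux


/-- If `(R, T, ψ)` is a bipartite exact embezzlement protocol for `α`, then for all `X ∈ M`,
`Y ∈ M'` and all `i, j`: `(R i j)* (Y ψ) = δ_{j0} (1/α i) • Y (T i 0) ψ` and
`(T i j)* (X ψ) = δ_{j0} (1/α i) • X (R i 0) ψ`. -/
theorem blocks_determined_on_subspace
    {H : Type*} [NormedAddCommGroup H] [InnerProductSpace ℂ H] [CompleteSpace H]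
    (M : VonNeumannAlgebra H) {d : ℕ} [NeZero d] (hd : 2 ≤ d)
    (α : Fin d → ℝ) (hα : ∀ i, 0 < α i) (hsum : ∑ i, (α i) ^ 2 = 1)
    (R T : Fin d → Fin d → H →L[ℂ] H) (ψ : H)
    (hproto : BipartiteProtocol M α R T ψ) :
    ∀ X ∈ M, ∀ Y ∈ M.commutant, ∀ i j : Fin d,
      (adjoint (R i j)) (Y ψ)
          = (if j = 0 then ((1 / α i : ℝ) : ℂ) • (Y ((T i 0) ψ)) else 0) ∧
        (adjoint (T i j)) (X ψ)
          = (if j = 0 then ((1 / α i : ℝ) : ℂ) • (X ((R i 0) ψ)) else 0) := by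
  obtain ⟨⟨hRmem, hRnorm⟩, ⟨hTmem, hTnorm⟩, hψ, hRT⟩ := hproto
  intro X hX Y hY i j
  have hTR : ∀ i' j', (T i' 0) ((R j' 0) ψ) = (if i' = j' then (α i' : ℂ) else 0) • ψ := by
    intro i' j'
    have hc : R j' 0 * T i' 0 = T i' 0 * R j' 0 :=
      (VonNeumannAlgebra.mem_commutant_iff.mp (hTmem i' 0)) (R j' 0) (hRmem j' 0)
    calc (T i' 0) ((R j' 0) ψ) = (T i' 0 * R j' 0) ψ := rfl
    _ = (R j' 0 * T i' 0) ψ := by rw [hc]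
    _ = (R j' 0) ((T i' 0) ψ) := rfl
    _ = (if j' = i' then (α j' : ℂ) else 0) • ψ := hRT j' i'
    _ = (if i' = j' then (α i' : ℂ) else 0) • ψ := by
        by_cases h : i' = j'
        · subst h; simp
        · simp [h, Ne.symm h]
  have keyR := key α hα hsum R T ψ hψ hRnorm hTnorm hRT
  have keyT := key α hα hsum T R ψ hψ hTnorm hRnorm hTR
  constructor
  · have hstar : star (R i j) ∈ M := star_mem (hRmem i j)
    have hcomm : star (R i j) * Y = Y * star (R i j) :=
      (VonNeumannAlgebra.mem_commutant_iff.mp hY) (star (R i j)) hstar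
    rw [star_eq_adjoint] at hcomm
    calc (adjoint (R i j)) (Y ψ) = (adjoint (R i j) * Y) ψ := rfl
    _ = (Y * adjoint (R i j)) ψ := by rw [hcomm]
    _ = Y ((adjoint (R i j)) ψ) := rfl
    _ = _ := by
        rw [keyR i j]
        by_cases h : j = 0
        · simp [h]
        · simp [h]
  · have hstar : star (T i j) ∈ M.commutant := star_mem (hTmem i j)
    have hcomm : X * star (T i j) = star (T i j) * X :=
      (VonNeumannAlgebra.mem_commutant_iff.mp hstar) X hX
    rw [star_eq_adjoint] at hcomm
    calc (adjoint (T i j)) (X ψ) = (adjoint (T i j) * X) ψ := rfl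
    _ = (X * adjoint (T i j)) ψ := by rw [← hcomm]
    _ = X ((adjoint (T i j)) ψ) := rfl
    _ = _ := by
        rw [keyT i j]
        by_cases h : j = 0
        · simp [h]
        · simp [h]
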